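/- If Φ : Mₘ(ℂ) → Mₙ(ℂ) is a strictly positive linear map (maps positive definite matrices to positive definite matrices), then for all positive definite matrices X, Y one has Φ(X ! Y) ≤ Φ(X) ! Φ(Y), where ! denotes the harmonic mean and ≤ is the Loewner order. -/

import Mathlib

open Matrix ComplexOrder

section Helpers

variable {k : ℕ}

lemma herm_form_real (M : Matrix (Fin k) (Fin k) ℂ) (hM : M.IsHermitian)
    (x : Fin k → ℂ) : (star x ⬝ᵥ M *ᵥ x) = (((star x ⬝ᵥ M *ᵥ x).re : ℝ) : ℂ) := by
  have h : (starRingEnd ℂ) (star x ⬝ᵥ M *ᵥ x) = star x ⬝ᵥ M *ᵥ x := by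
    have h2 : star (star x ⬝ᵥ M *ᵥ x) = star (M *ᵥ x) ⬝ᵥ x := by
      rw [star_dotProduct]; simp
    have h3 : star (M *ᵥ x) ⬝ᵥ x = star x ⬝ᵥ M *ᵥ x := by
      rw [star_mulVec, ← dotProduct_mulVec, hM.eq]
    simpa using h2.trans h3
  exact ((Complex.conj_eq_iff_re).mp h).symm

lemma sub_psd_of_forms (S T : Matrix (Fin k) (Fin k) ℂ) (hS : S.IsHermitian)
    (hT : T.IsHermitian)
    (h : ∀ x, (star x ⬝ᵥ S *ᵥ x).re ≤ (star x ⬝ᵥ T *ᵥ x).re) :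
    (T - S).PosSemidef := by
  refine Matrix.PosSemidef.of_dotProduct_mulVec_nonneg (hT.sub hS) (fun x => ?_)
  have h1 : star x ⬝ᵥ (T - S) *ᵥ x = star x ⬝ᵥ T *ᵥ x - star x ⬝ᵥ S *ᵥ x := by
    rw [Matrix.sub_mulVec, dotProduct_sub]
  rw [h1, herm_form_real T hT, herm_form_real S hS, ← Complex.ofReal_sub]
  rw [Complex.zero_le_real]
  linarith [h x]

end Helpers

section Helpers2

variable {k : ℕ}

lemma smul_posDef {M : Matrix (Fin k) (Fin k) ℂ} (hM : M.PosDef) {r : ℝ} (hr : 0 < r) :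
    (((r : ℂ)) • M).PosDef := by
  refine Matrix.PosDef.of_dotProduct_mulVec_pos ?_ (fun x hx => ?_)
  · unfold Matrix.IsHermitian
    rw [Matrix.conjTranspose_smul, hM.1.eq]
    congr 1
    simp [Complex.conj_ofReal]
  · have h1 := hM.dotProduct_mulVec_pos hx
    have h2 : star x ⬝ᵥ ((r : ℂ) • M) *ᵥ x = (r : ℂ) * (star x ⬝ᵥ M *ᵥ x) := by
      rw [Matrix.smul_mulVec, dotProduct_smul, smul_eq_mul]
    rw [h2, herm_form_real M hM.1, ← Complex.ofReal_mul, Complex.zero_lt_real]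
    have : 0 < (star x ⬝ᵥ M *ᵥ x).re := by
      rw [herm_form_real M hM.1, Complex.zero_lt_real] at h1
      exact h1
    positivity

lemma congr_posDef {M B : Matrix (Fin k) (Fin k) ℂ} (hM : M.PosDef) (hB : IsUnit B.det) :
    (B * M * Bᴴ).PosDef := by
  have hUnit : IsUnit B := (Matrix.isUnit_iff_isUnit_det B).mpr hB
  refine Matrix.PosDef.of_dotProduct_mulVec_pos (Matrix.isHermitian_mul_mul_conjTranspose B hM.1) (fun x hx => ?_)
  have hinj : Function.Injective (Bᴴ).mulVec := by
    have : IsUnit (Bᴴ) := by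
      rw [← Matrix.star_eq_conjTranspose]
      exact hUnit.star
    exact Matrix.mulVec_injective_iff_isUnit.2 this
  have hne : Bᴴ *ᵥ x ≠ 0 := by
    intro h0
    apply hx
    have := hinj (a₁ := x) (a₂ := 0) (by simpa using h0)
    simpa using this
  have := hM.dotProduct_mulVec_pos hne
  have heq : star x ⬝ᵥ (B * M * Bᴴ) *ᵥ x = star (Bᴴ *ᵥ x) ⬝ᵥ M *ᵥ (Bᴴ *ᵥ x) := by
    simp [star_mulVec, dotProduct_mulVec, Matrix.vecMul_vecMul, Matrix.mulVec_mulVec,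
      Matrix.mul_assoc]
  rw [heq]
  exact this

end Helpers2

section Helpers3

lemma phi_psd {m n : ℕ}
    (Φ : Matrix (Fin m) (Fin m) ℂ →ₗ[ℂ] Matrix (Fin n) (Fin n) ℂ)
    (hΦ : ∀ A : Matrix (Fin m) (Fin m) ℂ, A.PosDef → (Φ A).PosDef)
    {P : Matrix (Fin m) (Fin m) ℂ} (hP : P.PosSemidef) : (Φ P).PosSemidef := by
  have h1 : (Φ 1).PosDef := hΦ 1 Matrix.PosDef.one
  have hP1 : (Φ (1 + P)).PosDef := hΦ _ (Matrix.PosDef.add_posSemidef Matrix.PosDef.one hP)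
  have hHerm : (Φ P).IsHermitian := by
    have : Φ P = Φ (1 + P) - Φ 1 := by
      rw [map_add]; abel
    rw [this]
    exact hP1.1.sub h1.1
  refine Matrix.PosSemidef.of_dotProduct_mulVec_nonneg hHerm (fun x => ?_)
  rcases eq_or_ne x 0 with rfl | hx
  · simp
  have hb : 0 < (star x ⬝ᵥ (Φ 1) *ᵥ x).re := by
    have := h1.dotProduct_mulVec_pos hx
    rwa [herm_form_real _ h1.1, Complex.zero_lt_real] at this
  have key : ∀ ε : ℝ, 0 < ε → 0 < (star x ⬝ᵥ (Φ P) *ᵥ x).re + ε * (star x ⬝ᵥ (Φ 1) *ᵥ x).re := by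
    intro ε hε
    have hPe : (((ε : ℂ)) • (1 : Matrix (Fin m) (Fin m) ℂ) + P).PosDef :=
      Matrix.PosDef.add_posSemidef (smul_posDef Matrix.PosDef.one hε) hP
    have h2 := (hΦ _ hPe).dotProduct_mulVec_pos hx
    have h3 : Φ ((ε : ℂ) • 1 + P) = (ε : ℂ) • Φ 1 + Φ P := by
      rw [map_add, _root_.map_smul]
    rw [h3] at h2
    have h4 : star x ⬝ᵥ ((ε : ℂ) • Φ 1 + Φ P) *ᵥ x
        = (ε : ℂ) * (star x ⬝ᵥ (Φ 1) *ᵥ x) + star x ⬝ᵥ (Φ P) *ᵥ x := by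
      rw [Matrix.add_mulVec, dotProduct_add, Matrix.smul_mulVec, dotProduct_smul,
        smul_eq_mul]
    rw [h4, herm_form_real _ h1.1, herm_form_real _ hHerm, ← Complex.ofReal_mul,
      ← Complex.ofReal_add, Complex.zero_lt_real] at h2
    linarith
  rw [herm_form_real _ hHerm, Complex.zero_le_real]
  by_contra hneg
  push_neg at hneg
  set a := (star x ⬝ᵥ (Φ P) *ᵥ x).re
  set b := (star x ⬝ᵥ (Φ 1) *ᵥ x).re
  have hε : 0 < -a / (2 * b) := by
    apply div_pos (by linarith) (by linarith)
  have := key _ hε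
  have : a + (-a / (2*b)) * b = a / 2 := by field_simp; ring
  linarith [key _ hε]

end Helpers3

section Helpers4

variable {k : ℕ}

lemma keyj (Q : Matrix (Fin k) (Fin k) ℂ) (hQ : Q.PosSemidef) (u v : Fin k → ℂ)
    (t : ℝ) (ht : 0 < t) :
    (star (u + v) ⬝ᵥ Q *ᵥ (u + v)).re ≤
      (1 + t) * (star u ⬝ᵥ Q *ᵥ u).re + (1 + t⁻¹) * (star v ⬝ᵥ Q *ᵥ v).re := by
  set quu := star u ⬝ᵥ Q *ᵥ u
  set qvv := star v ⬝ᵥ Q *ᵥ v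
  set quv := star u ⬝ᵥ Q *ᵥ v
  set qvu := star v ⬝ᵥ Q *ᵥ u
  have hexp : (star (u + v) ⬝ᵥ Q *ᵥ (u + v)).re = quu.re + qvv.re + (quv.re + qvu.re) := by
    rw [star_add, Matrix.mulVec_add, dotProduct_add, add_dotProduct, add_dotProduct]
    simp only [Complex.add_re, quu, qvv, quv, qvu]
    ring
  have h0 : 0 ≤ (star ((t : ℂ) • u - v) ⬝ᵥ Q *ᵥ ((t : ℂ) • u - v)).re := by
    have := hQ.dotProduct_mulVec_nonneg ((t : ℂ) • u - v)
    rw [herm_form_real _ hQ.1, Complex.zero_le_real] at this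
    exact this
  have hexp2 : (star ((t : ℂ) • u - v) ⬝ᵥ Q *ᵥ ((t : ℂ) • u - v)).re
      = t * t * quu.re + qvv.re - t * (quv.re + qvu.re) := by
    have hstar : star ((t : ℂ) • u - v) = (t : ℂ) • star u - star v := by
      rw [star_sub, star_smul]
      simp [Complex.conj_ofReal]
    rw [hstar, Matrix.mulVec_sub, Matrix.mulVec_smul, sub_dotProduct, smul_dotProduct,
      dotProduct_sub, dotProduct_sub, dotProduct_smul, dotProduct_smul]
    simp only [smul_eq_mul, Complex.sub_re, Complex.add_re, Complex.mul_re,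
      Complex.ofReal_re, Complex.ofReal_im, quu, qvv, quv, qvu]
    ring
  rw [hexp]
  rw [hexp2] at h0
  have hquu : 0 ≤ quu.re := by
    have := hQ.dotProduct_mulVec_nonneg u; rw [herm_form_real _ hQ.1, Complex.zero_le_real] at this; exact this
  have hqvv : 0 ≤ qvv.re := by
    have := hQ.dotProduct_mulVec_nonneg v; rw [herm_form_real _ hQ.1, Complex.zero_le_real] at this; exact this
  have ht' : t⁻¹ * t = 1 := inv_mul_cancel₀ ht.ne'
  nlinarith [mul_le_mul_of_nonneg_left h0 (le_of_lt (inv_pos.mpr ht))]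

lemma diag_sum (c : Fin k → ℂ) :
    (Matrix.diagonal c : Matrix (Fin k) (Fin k) ℂ)
      = ∑ j, Matrix.single j j (c j) := by
  ext i l
  rw [Matrix.sum_apply]
  by_cases h : i = l
  · subst h
    rw [Matrix.diagonal_apply_eq]
    rw [Finset.sum_eq_single i]
    · simp [Matrix.single]
    · intro b _ hb
      simp [Matrix.single, hb, Ne.symm hb]
    · simp
  · rw [Matrix.diagonal_apply_ne _ h]
    symm
    apply Finset.sum_eq_zero
    intro b _
    simp [Matrix.single]
    intro h1 h2
    exact absurd (h1.symm.trans h2) h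
end Helpers4

section Helpers5

lemma form_sum' {k l : ℕ} (f : Fin l → Matrix (Fin k) (Fin k) ℂ) (x : Fin k → ℂ) :
    star x ⬝ᵥ (∑ j, f j) *ᵥ x = ∑ j, star x ⬝ᵥ (f j) *ᵥ x := by
  have h1 : (∑ j, f j) *ᵥ x = ∑ j, f j *ᵥ x := by
    ext i
    simp only [Matrix.mulVec, dotProduct, Matrix.sum_apply, Finset.sum_apply, Finset.sum_mul]
    rw [Finset.sum_comm]
  rw [h1]
  simp only [dotProduct, Finset.sum_apply, Matrix.sum_apply, Finset.mul_sum]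
  rw [Finset.sum_comm]

lemma stdBasis_smul {k : ℕ} (j : Fin k) (c : ℂ) :
    Matrix.single j j c = c • Matrix.single j j (1 : ℂ) := by
  ext i l
  simp [Matrix.single]

lemma two_smul_posDef {k : ℕ} {M : Matrix (Fin k) (Fin k) ℂ} (hM : M.PosDef) :
    ((2 : ℂ) • M).PosDef := by
  have := smul_posDef hM (show (0:ℝ) < 2 by norm_num)
  have h2 : ((2:ℝ) : ℂ) = (2 : ℂ) := by norm_num
  rwa [h2] at this

lemma half_smul_posDef {k : ℕ} {M : Matrix (Fin k) (Fin k) ℂ} (hM : M.PosDef) :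
    ((2 : ℂ)⁻¹ • M).PosDef := by
  have := smul_posDef hM (show (0:ℝ) < 2⁻¹ by norm_num)
  have h2 : (((2⁻¹:ℝ)) : ℂ) = (2 : ℂ)⁻¹ := by
    rw [Complex.ofReal_inv]; norm_num
  rwa [h2] at this

end Helpers5

section Step1

lemma step1 {m n : ℕ}
    (Φ : Matrix (Fin m) (Fin m) ℂ →ₗ[ℂ] Matrix (Fin n) (Fin n) ℂ)
    (hΦ : ∀ A : Matrix (Fin m) (Fin m) ℂ, A.PosDef → (Φ A).PosDef)
    (X Y : Matrix (Fin m) (Fin m) ℂ) (hX : X.PosDef) (hY : Y.PosDef)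
    (u v : Fin n → ℂ) :
    (star (u + v) ⬝ᵥ (Φ (((2 : ℂ)⁻¹ • (X⁻¹ + Y⁻¹))⁻¹)) *ᵥ (u + v)).re ≤
      2 * (star u ⬝ᵥ (Φ X) *ᵥ u).re + 2 * (star v ⬝ᵥ (Φ Y) *ᵥ v).re := by
  classical
  set H : Matrix (Fin m) (Fin m) ℂ := ((2 : ℂ)⁻¹ • (X⁻¹ + Y⁻¹))⁻¹ with hH_def
  have hhalf : ((2 : ℂ)⁻¹ • (X⁻¹ + Y⁻¹)).PosDef := half_smul_posDef (hX.inv.add hY.inv)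
  have hH : H.PosDef := hhalf.inv
  -- square root of H
  open scoped MatrixOrder in set R : Matrix (Fin m) (Fin m) ℂ := CFC.sqrt H with hR_def
  have hRps : R.PosSemidef := by
    open scoped MatrixOrder in exact (CFC.sqrt_nonneg H).posSemidef
  have hRH : R * R = H := by
    open scoped MatrixOrder in exact CFC.sqrt_mul_sqrt_self H hH.posSemidef.nonneg
  have hRdet : IsUnit R.det := by
    have hdet : R.det * R.det = H.det := by rw [← Matrix.det_mul, hRH]
    have hHdet : H.det ≠ 0 := ne_of_gt hH.det_pos
    rw [isUnit_iff_ne_zero]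
    intro h0
    rw [h0, mul_zero] at hdet
    exact hHdet hdet.symm
  have hRmul : R * R⁻¹ = 1 := Matrix.mul_nonsing_inv R hRdet
  have hRmul' : R⁻¹ * R = 1 := Matrix.nonsing_inv_mul R hRdet
  have hRinvH : (R⁻¹).IsHermitian := hRps.1.inv
  -- doubled matrices
  set X2 : Matrix (Fin m) (Fin m) ℂ := (2 : ℂ) • X with hX2_def
  set Y2 : Matrix (Fin m) (Fin m) ℂ := (2 : ℂ) • Y with hY2_def
  have hX2 : X2.PosDef := two_smul_posDef hX
  have hY2 : Y2.PosDef := two_smul_posDef hY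
  have hX2det : IsUnit X2.det := isUnit_iff_ne_zero.mpr hX2.det_pos.ne'
  have hY2det : IsUnit Y2.det := isUnit_iff_ne_zero.mpr hY2.det_pos.ne'
  have hRinvdet : IsUnit (R⁻¹).det := Matrix.isUnit_nonsing_inv_det R hRdet
  -- the congruences A and B
  set A : Matrix (Fin m) (Fin m) ℂ := R⁻¹ * X2 * R⁻¹ with hA_def
  set B : Matrix (Fin m) (Fin m) ℂ := R⁻¹ * Y2 * R⁻¹ with hB_def
  have hA : A.PosDef := by
    have := congr_posDef hX2 hRinvdet
    rwa [hRinvH.eq] at this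
  have hB : B.PosDef := by
    have := congr_posDef hY2 hRinvdet
    rwa [hRinvH.eq] at this
  have hAdet : IsUnit A.det := isUnit_iff_ne_zero.mpr hA.det_pos.ne'
  have hBdet : IsUnit B.det := isUnit_iff_ne_zero.mpr hB.det_pos.ne'
  -- inverse identities
  have hXdet : IsUnit X.det := isUnit_iff_ne_zero.mpr hX.det_pos.ne'
  have hYdet : IsUnit Y.det := isUnit_iff_ne_zero.mpr hY.det_pos.ne'
  have hX2inv : X2⁻¹ = (2 : ℂ)⁻¹ • X⁻¹ := by
    apply Matrix.inv_eq_right_inv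
    rw [hX2_def, Matrix.smul_mul, Matrix.mul_smul, smul_smul,
      Matrix.mul_nonsing_inv X hXdet]
    norm_num
  have hY2inv : Y2⁻¹ = (2 : ℂ)⁻¹ • Y⁻¹ := by
    apply Matrix.inv_eq_right_inv
    rw [hY2_def, Matrix.smul_mul, Matrix.mul_smul, smul_smul,
      Matrix.mul_nonsing_inv Y hYdet]
    norm_num
  have hHinv : H⁻¹ = X2⁻¹ + Y2⁻¹ := by
    rw [hH_def, Matrix.nonsing_inv_nonsing_inv _
      (isUnit_iff_ne_zero.mpr hhalf.det_pos.ne'), hX2inv, hY2inv, smul_add]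
  have hAinv : A⁻¹ = R * X2⁻¹ * R := by
    apply Matrix.inv_eq_right_inv
    rw [hA_def]
    rw [show R⁻¹ * X2 * R⁻¹ * (R * X2⁻¹ * R)
        = R⁻¹ * X2 * (R⁻¹ * R) * X2⁻¹ * R by simp only [Matrix.mul_assoc]]
    rw [hRmul']
    rw [Matrix.mul_one, show R⁻¹ * X2 * X2⁻¹ * R = R⁻¹ * (X2 * X2⁻¹) * R by
      simp only [Matrix.mul_assoc]]
    rw [Matrix.mul_nonsing_inv _ hX2det, Matrix.mul_one, hRmul']
  have hBinv : B⁻¹ = R * Y2⁻¹ * R := by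
    apply Matrix.inv_eq_right_inv
    rw [hB_def]
    rw [show R⁻¹ * Y2 * R⁻¹ * (R * Y2⁻¹ * R)
        = R⁻¹ * Y2 * (R⁻¹ * R) * Y2⁻¹ * R by simp only [Matrix.mul_assoc]]
    rw [hRmul']
    rw [Matrix.mul_one, show R⁻¹ * Y2 * Y2⁻¹ * R = R⁻¹ * (Y2 * Y2⁻¹) * R by
      simp only [Matrix.mul_assoc]]
    rw [Matrix.mul_nonsing_inv _ hY2det, Matrix.mul_one, hRmul']
  have hABone : A⁻¹ + B⁻¹ = 1 := by
    rw [hAinv, hBinv]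
    have h1 : R * X2⁻¹ * R + R * Y2⁻¹ * R = R * (X2⁻¹ + Y2⁻¹) * R := by
      rw [Matrix.mul_add, Matrix.add_mul]
    rw [h1, ← hHinv, ← hRH, Matrix.mul_inv_rev]
    rw [show R * (R⁻¹ * R⁻¹) * R = R * R⁻¹ * (R⁻¹ * R) by simp only [Matrix.mul_assoc]]
    rw [hRmul, hRmul', Matrix.one_mul]
  -- spectral decomposition of A
  have hAh : A.IsHermitian := hA.1
  set U : Matrix (Fin m) (Fin m) ℂ := (Matrix.IsHermitian.eigenvectorUnitary hAh :
    Matrix (Fin m) (Fin m) ℂ) with hU_def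
  set d : Fin m → ℝ := hAh.eigenvalues with hd_def
  have hdpos : ∀ j, 0 < d j := fun j => hA.eigenvalues_pos j
  have hUU : U * star U = 1 :=
    (Matrix.mem_unitaryGroup_iff).mp (Matrix.IsHermitian.eigenvectorUnitary hAh).2
  have hUU' : star U * U = 1 :=
    (Matrix.mem_unitaryGroup_iff').mp (Matrix.IsHermitian.eigenvectorUnitary hAh).2
  have hUdet : IsUnit U.det := by
    apply IsUnit.of_mul_eq_one (star U).det
    rw [← Matrix.det_mul, hUU, Matrix.det_one]
  set diagd : Matrix (Fin m) (Fin m) ℂ := Matrix.diagonal (fun j => ((d j : ℝ) : ℂ))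
    with hdiagd_def
  have hspec : A = U * diagd * star U := by
    have := hAh.spectral_theorem
    rw [Unitary.conjStarAlgAut_apply] at this
    rw [hU_def, hdiagd_def]
    exact this
  -- inverse of A via diagonal
  have hdne : ∀ j, ((d j : ℝ) : ℂ) ≠ 0 := fun j => by
    simpa using (hdpos j).ne'
  have hAinv_eq : A⁻¹ = U * Matrix.diagonal (fun j => ((d j : ℝ) : ℂ)⁻¹) * star U := by
    apply Matrix.inv_eq_right_inv
    rw [hspec]
    rw [show U * diagd * star U * (U * Matrix.diagonal (fun j => ((d j : ℝ) : ℂ)⁻¹) * star U)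
        = U * diagd * (star U * U) * Matrix.diagonal (fun j => ((d j : ℝ) : ℂ)⁻¹) * star U by
      simp only [Matrix.mul_assoc]]
    rw [hUU', Matrix.mul_one, hdiagd_def,
      show U * Matrix.diagonal (fun j => ((d j : ℝ) : ℂ)) *
          Matrix.diagonal (fun j => ((d j : ℝ) : ℂ)⁻¹) * star U
        = U * (Matrix.diagonal (fun j => ((d j : ℝ) : ℂ)) *
          Matrix.diagonal (fun j => ((d j : ℝ) : ℂ)⁻¹)) * star U by
      simp only [Matrix.mul_assoc]]
    rw [Matrix.diagonal_mul_diagonal]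
    have : (fun j => ((d j : ℝ) : ℂ) * ((d j : ℝ) : ℂ)⁻¹) = fun _ => (1 : ℂ) := by
      funext j
      exact mul_inv_cancel₀ (hdne j)
    rw [this, Matrix.diagonal_one, Matrix.mul_one, hUU]
  have hBinv_eq : B⁻¹ = U * Matrix.diagonal (fun j => 1 - ((d j : ℝ) : ℂ)⁻¹) * star U := by
    have h1 : B⁻¹ = 1 - A⁻¹ := by
      rw [← hABone]; abel
    rw [h1, hAinv_eq]
    have h2 : (1 : Matrix (Fin m) (Fin m) ℂ) = U * 1 * star U := by
      rw [Matrix.mul_one, hUU]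
    rw [h2]
    rw [← Matrix.sub_mul, ← Matrix.mul_sub]
    congr 2
    rw [← Matrix.diagonal_one, Matrix.diagonal_sub]
  -- entries of B⁻¹-diagonal are positive, hence d j > 1
  have hdgt1 : ∀ j, 1 < d j := by
    intro j
    have hBi : (B⁻¹).PosDef := hB.inv
    have hcong : (Matrix.diagonal (fun j => 1 - ((d j : ℝ) : ℂ)⁻¹)).PosDef := by
      have h3 : star U * B⁻¹ * (star U)ᴴ = Matrix.diagonal (fun j => 1 - ((d j : ℝ) : ℂ)⁻¹) := by
        rw [hBinv_eq, ← Matrix.star_eq_conjTranspose, star_star]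
        rw [show star U * (U * Matrix.diagonal (fun j => 1 - ((d j : ℝ) : ℂ)⁻¹) * star U) * U
            = (star U * U) * Matrix.diagonal (fun j => 1 - ((d j : ℝ) : ℂ)⁻¹) * (star U * U) by
          simp only [Matrix.mul_assoc]]
        rw [hUU', Matrix.one_mul, Matrix.mul_one]
      have hUsdet : IsUnit (star U).det := by
        apply IsUnit.of_mul_eq_one U.det
        rw [← Matrix.det_mul, hUU', Matrix.det_one]
      have := congr_posDef hBi hUsdet
      rwa [h3] at this
    have hpos := (Matrix.posDef_diagonal_iff.mp hcong) j
    have hr : (0:ℂ) < ((1 - (d j)⁻¹ : ℝ) : ℂ) := by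
      convert hpos using 1
      push_cast
      ring
    rw [Complex.zero_lt_real] at hr
    have hd := hdpos j
    nlinarith [mul_pos hd hr, mul_inv_cancel₀ hd.ne']
  -- the function e
  set e : Fin m → ℝ := fun j => (1 - (d j)⁻¹)⁻¹ with he_def
  have hed : ∀ j, (1 - (d j)⁻¹) * e j = 1 := by
    intro j
    have : 1 - (d j)⁻¹ ≠ 0 := by
      have hd := hdpos j
      have h1 : (d j)⁻¹ < 1 := by
        rw [inv_lt_one_iff₀]
        right; exact hdgt1 j
      intro h0
      nlinarith
    rw [he_def]
    exact mul_inv_cancel₀ this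
  have hB_eq : B = U * Matrix.diagonal (fun j => ((e j : ℝ) : ℂ)) * star U := by
    rw [← Matrix.nonsing_inv_nonsing_inv B hBdet]
    apply Matrix.inv_eq_right_inv
    rw [hBinv_eq]
    rw [show U * Matrix.diagonal (fun j => 1 - ((d j : ℝ) : ℂ)⁻¹) * star U *
          (U * Matrix.diagonal (fun j => ((e j : ℝ) : ℂ)) * star U)
        = U * Matrix.diagonal (fun j => 1 - ((d j : ℝ) : ℂ)⁻¹) * (star U * U) *
          Matrix.diagonal (fun j => ((e j : ℝ) : ℂ)) * star U by
      simp only [Matrix.mul_assoc]]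
    rw [hUU', Matrix.mul_one,
      show U * Matrix.diagonal (fun j => 1 - ((d j : ℝ) : ℂ)⁻¹) *
          Matrix.diagonal (fun j => ((e j : ℝ) : ℂ)) * star U
        = U * (Matrix.diagonal (fun j => 1 - ((d j : ℝ) : ℂ)⁻¹) *
          Matrix.diagonal (fun j => ((e j : ℝ) : ℂ))) * star U by
      simp only [Matrix.mul_assoc]]
    rw [Matrix.diagonal_mul_diagonal]
    have : (fun j => (1 - ((d j : ℝ) : ℂ)⁻¹) * ((e j : ℝ) : ℂ)) = fun _ => (1 : ℂ) := by
      funext j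
      rw [show (1 - ((d j : ℝ) : ℂ)⁻¹) = (((1 - (d j)⁻¹ : ℝ)) : ℂ) by push_cast; ring,
        ← Complex.ofReal_mul, hed j, Complex.ofReal_one]
    rw [this, Matrix.diagonal_one, Matrix.mul_one, hUU]
  -- V and the rank-one pieces
  set V : Matrix (Fin m) (Fin m) ℂ := R * U with hV_def
  have hVH : Vᴴ = star U * R := by
    rw [hV_def, Matrix.conjTranspose_mul, hRps.1.eq, Matrix.star_eq_conjTranspose]
  set P : Fin m → Matrix (Fin m) (Fin m) ℂ :=
    fun j => V * Matrix.single j j (1 : ℂ) * Vᴴ with hP_def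
  have hEH : ∀ j : Fin m, (Matrix.single j j (1 : ℂ))ᴴ
      = Matrix.single j j (1 : ℂ) := by
    intro j; ext i l
    simp only [Matrix.conjTranspose_apply, Matrix.single, Matrix.of_apply]
    by_cases h1 : j = i <;> by_cases h2 : j = l <;> simp [h1, h2]
  have hPpsd : ∀ j, (P j).PosSemidef := by
    intro j
    have h0 : P j = (V * Matrix.single j j (1 : ℂ)) *
        (V * Matrix.single j j (1 : ℂ))ᴴ := by
      simp only [hP_def]
      conv_rhs => rw [Matrix.conjTranspose_mul, hEH j]
      rw [show V * Matrix.single j j (1:ℂ) * (Matrix.single j j (1:ℂ) * Vᴴ)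
          = V * (Matrix.single j j (1:ℂ) * Matrix.single j j (1:ℂ)) * Vᴴ by
        simp only [Matrix.mul_assoc]]
      rw [Matrix.single_mul_single_same]
      norm_num
    rw [h0]
    exact Matrix.posSemidef_self_mul_conjTranspose _
  have expand : ∀ c : Fin m → ℂ, V * Matrix.diagonal c * Vᴴ = ∑ j, c j • P j := by
    intro c
    rw [diag_sum c, Matrix.mul_sum, Matrix.sum_mul]
    apply Finset.sum_congr rfl
    intro j _
    rw [stdBasis_smul j (c j), Matrix.mul_smul, Matrix.smul_mul]
  have hVVH : V * Vᴴ = H := by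
    rw [hVH, hV_def,
      show R * U * (star U * R) = R * (U * star U) * R by simp only [Matrix.mul_assoc],
      hUU, Matrix.mul_one, hRH]
  have hsumH : H = ∑ j, P j := by
    have h1 := expand (fun _ => (1 : ℂ))
    rw [Matrix.diagonal_one, Matrix.mul_one, hVVH] at h1
    simpa using h1
  have hsumX : X2 = ∑ j, ((d j : ℝ) : ℂ) • P j := by
    have h1 := expand (fun j => ((d j : ℝ) : ℂ))
    have h2 : V * Matrix.diagonal (fun j => ((d j : ℝ) : ℂ)) * Vᴴ = X2 := by
      rw [hV_def, hVH, ← hdiagd_def,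
        show R * U * diagd * (star U * R) = R * (U * diagd * star U) * R by
          simp only [Matrix.mul_assoc],
        ← hspec, hA_def,
        show R * (R⁻¹ * X2 * R⁻¹) * R = R * R⁻¹ * X2 * (R⁻¹ * R) by
          simp only [Matrix.mul_assoc],
        hRmul, hRmul', Matrix.one_mul, Matrix.mul_one]
    rw [← h2]; exact h1
  have hsumY : Y2 = ∑ j, ((e j : ℝ) : ℂ) • P j := by
    have h1 := expand (fun j => ((e j : ℝ) : ℂ))
    have h2 : V * Matrix.diagonal (fun j => ((e j : ℝ) : ℂ)) * Vᴴ = Y2 := by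
      rw [hV_def, hVH,
        show R * U * Matrix.diagonal (fun j => ((e j : ℝ) : ℂ)) * (star U * R)
          = R * (U * Matrix.diagonal (fun j => ((e j : ℝ) : ℂ)) * star U) * R by
          simp only [Matrix.mul_assoc],
        ← hB_eq, hB_def,
        show R * (R⁻¹ * Y2 * R⁻¹) * R = R * R⁻¹ * Y2 * (R⁻¹ * R) by
          simp only [Matrix.mul_assoc],
        hRmul, hRmul', Matrix.one_mul, Matrix.mul_one]
    rw [← h2]; exact h1
  -- forms
  have hform : ∀ (c : Fin m → ℂ) (x : Fin n → ℂ),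
      star x ⬝ᵥ (Φ (∑ j, c j • P j)) *ᵥ x = ∑ j, c j * (star x ⬝ᵥ (Φ (P j)) *ᵥ x) := by
    intro c x
    rw [map_sum, form_sum']
    apply Finset.sum_congr rfl
    intro j _
    rw [_root_.map_smul, Matrix.smul_mulVec, dotProduct_smul, smul_eq_mul]
  have hkeyj : ∀ j, (star (u + v) ⬝ᵥ (Φ (P j)) *ᵥ (u + v)).re ≤
      d j * (star u ⬝ᵥ (Φ (P j)) *ᵥ u).re + e j * (star v ⬝ᵥ (Φ (P j)) *ᵥ v).re := by
    intro j
    have hq := phi_psd Φ hΦ (hPpsd j)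
    have ht : (0 : ℝ) < d j - 1 := by linarith [hdgt1 j]
    have hkj := keyj _ hq u v (d j - 1) ht
    have hd1 : 1 + (d j - 1) = d j := by ring
    have he1 : 1 + (d j - 1)⁻¹ = e j := by
      rw [he_def]
      have h1 : d j - 1 ≠ 0 := ht.ne'
      have h2 : d j ≠ 0 := (hdpos j).ne'
      field_simp
      ring
    rw [hd1, he1] at hkj
    exact hkj
  have hXform : ∑ j, d j * (star u ⬝ᵥ (Φ (P j)) *ᵥ u).re = 2 * (star u ⬝ᵥ (Φ X) *ᵥ u).re := by
    have h1 : star u ⬝ᵥ (Φ X2) *ᵥ u = ∑ j, ((d j : ℝ) : ℂ) * (star u ⬝ᵥ (Φ (P j)) *ᵥ u) := by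
      rw [hsumX, hform]
    have h2 : star u ⬝ᵥ (Φ X2) *ᵥ u = 2 * (star u ⬝ᵥ (Φ X) *ᵥ u) := by
      rw [hX2_def, _root_.map_smul, Matrix.smul_mulVec, dotProduct_smul, smul_eq_mul]
    have h3 := congrArg Complex.re (h1.symm.trans h2)
    rw [Complex.re_sum] at h3
    simp only [Complex.re_ofReal_mul] at h3
    rw [h3]
    simp [Complex.mul_re]
  have hYform : ∑ j, e j * (star v ⬝ᵥ (Φ (P j)) *ᵥ v).re = 2 * (star v ⬝ᵥ (Φ Y) *ᵥ v).re := by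
    have h1 : star v ⬝ᵥ (Φ Y2) *ᵥ v = ∑ j, ((e j : ℝ) : ℂ) * (star v ⬝ᵥ (Φ (P j)) *ᵥ v) := by
      rw [hsumY, hform]
    have h2 : star v ⬝ᵥ (Φ Y2) *ᵥ v = 2 * (star v ⬝ᵥ (Φ Y) *ᵥ v) := by
      rw [hY2_def, _root_.map_smul, Matrix.smul_mulVec, dotProduct_smul, smul_eq_mul]
    have h3 := congrArg Complex.re (h1.symm.trans h2)
    rw [Complex.re_sum] at h3
    simp only [Complex.re_ofReal_mul] at h3
    rw [h3]
    simp [Complex.mul_re]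
  have hHform : (star (u + v) ⬝ᵥ (Φ H) *ᵥ (u + v)).re
      = ∑ j, (star (u + v) ⬝ᵥ (Φ (P j)) *ᵥ (u + v)).re := by
    have h1 : star (u + v) ⬝ᵥ (Φ H) *ᵥ (u + v)
        = ∑ j, (1 : ℂ) * (star (u + v) ⬝ᵥ (Φ (P j)) *ᵥ (u + v)) := by
      rw [show Φ H = Φ (∑ j, (1:ℂ) • P j) by rw [hsumH]; simp, hform]
    rw [h1, Complex.re_sum]
    simp
  rw [hHform, ← hXform, ← hYform, ← Finset.sum_add_distrib]
  exact Finset.sum_le_sum (fun j _ => hkeyj j)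

end Step1

/-- A strictly positive linear map is subadditive with respect to the
harmonic mean: `Φ(X ! Y) ≤ Φ(X) ! Φ(Y)` in the Loewner order. -/
theorem posMap_harmonic_mean {m n : ℕ}
    (Φ : Matrix (Fin m) (Fin m) ℂ →ₗ[ℂ] Matrix (Fin n) (Fin n) ℂ)
    (hΦ : ∀ A : Matrix (Fin m) (Fin m) ℂ, A.PosDef → (Φ A).PosDef)
    (X Y : Matrix (Fin m) (Fin m) ℂ) (hX : X.PosDef) (hY : Y.PosDef) :
    (((2 : ℂ)⁻¹ • ((Φ X)⁻¹ + (Φ Y)⁻¹))⁻¹ -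
      Φ (((2 : ℂ)⁻¹ • (X⁻¹ + Y⁻¹))⁻¹)).PosSemidef := by
  classical
  set M : Matrix (Fin n) (Fin n) ℂ := Φ X with hM_def
  set N : Matrix (Fin n) (Fin n) ℂ := Φ Y with hN_def
  have hM : M.PosDef := hΦ X hX
  have hN : N.PosDef := hΦ Y hY
  set H : Matrix (Fin m) (Fin m) ℂ := ((2 : ℂ)⁻¹ • (X⁻¹ + Y⁻¹))⁻¹ with hH_def
  have hH : H.PosDef := (half_smul_posDef (hX.inv.add hY.inv)).inv
  have hPhiH : (Φ H).PosDef := hΦ H hH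
  set T : Matrix (Fin n) (Fin n) ℂ := ((2 : ℂ)⁻¹ • (M⁻¹ + N⁻¹))⁻¹ with hT_def
  have hhalfMN : ((2 : ℂ)⁻¹ • (M⁻¹ + N⁻¹)).PosDef := half_smul_posDef (hM.inv.add hN.inv)
  have hT : T.PosDef := hhalfMN.inv
  -- determinants
  have hMdet : IsUnit M.det := isUnit_iff_ne_zero.mpr hM.det_pos.ne'
  have hNdet : IsUnit N.det := isUnit_iff_ne_zero.mpr hN.det_pos.ne'
  set Pm : Matrix (Fin n) (Fin n) ℂ := M + N with hPm_def
  have hPm : Pm.PosDef := hM.add hN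
  have hPmdet : IsUnit Pm.det := isUnit_iff_ne_zero.mpr hPm.det_pos.ne'
  have hMNdet : IsUnit (M⁻¹ + N⁻¹).det :=
    isUnit_iff_ne_zero.mpr (hM.inv.add hN.inv).det_pos.ne'
  set K : Matrix (Fin n) (Fin n) ℂ := (M⁻¹ + N⁻¹)⁻¹ with hK_def
  -- the two expressions for K
  have hsum_eq : M⁻¹ + N⁻¹ = M⁻¹ * Pm * N⁻¹ := by
    rw [hPm_def, Matrix.mul_add, Matrix.add_mul,
      Matrix.nonsing_inv_mul M hMdet, Matrix.one_mul,
      show M⁻¹ * N * N⁻¹ = M⁻¹ * (N * N⁻¹) by simp only [Matrix.mul_assoc],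
      Matrix.mul_nonsing_inv N hNdet, Matrix.mul_one]
    exact add_comm _ _
  have hK1 : K = N * Pm⁻¹ * M := by
    rw [hK_def]
    apply Matrix.inv_eq_right_inv
    rw [hsum_eq,
      show M⁻¹ * Pm * N⁻¹ * (N * Pm⁻¹ * M) = M⁻¹ * Pm * (N⁻¹ * N) * Pm⁻¹ * M by
        simp only [Matrix.mul_assoc],
      Matrix.nonsing_inv_mul N hNdet, Matrix.mul_one,
      show M⁻¹ * Pm * Pm⁻¹ * M = M⁻¹ * (Pm * Pm⁻¹) * M by simp only [Matrix.mul_assoc],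
      Matrix.mul_nonsing_inv Pm hPmdet, Matrix.mul_one, Matrix.nonsing_inv_mul M hMdet]
  have hsum_eq' : M⁻¹ + N⁻¹ = N⁻¹ * Pm * M⁻¹ := by
    rw [hPm_def, Matrix.mul_add, Matrix.add_mul,
      Matrix.nonsing_inv_mul N hNdet, Matrix.one_mul,
      show N⁻¹ * M * M⁻¹ = N⁻¹ * (M * M⁻¹) by simp only [Matrix.mul_assoc],
      Matrix.mul_nonsing_inv M hMdet, Matrix.mul_one]
    exact add_comm _ _
  have hK2 : K = M * Pm⁻¹ * N := by
    rw [hK_def]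
    apply Matrix.inv_eq_right_inv
    rw [hsum_eq',
      show N⁻¹ * Pm * M⁻¹ * (M * Pm⁻¹ * N) = N⁻¹ * Pm * (M⁻¹ * M) * Pm⁻¹ * N by
        simp only [Matrix.mul_assoc],
      Matrix.nonsing_inv_mul M hMdet, Matrix.mul_one,
      show N⁻¹ * Pm * Pm⁻¹ * N = N⁻¹ * (Pm * Pm⁻¹) * N by simp only [Matrix.mul_assoc],
      Matrix.mul_nonsing_inv Pm hPmdet, Matrix.mul_one, Matrix.nonsing_inv_mul N hNdet]
  have hTK : T = (2 : ℂ) • K := by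
    rw [hT_def]
    apply Matrix.inv_eq_right_inv
    rw [Matrix.smul_mul, Matrix.mul_smul, smul_smul,
      Matrix.mul_nonsing_inv _ hMNdet]
    norm_num
  -- key matrix identity
  have hI3 : (2:ℂ) • (N * Pm⁻¹ * M * Pm⁻¹ * N) + (2:ℂ) • (M * Pm⁻¹ * N * Pm⁻¹ * M) = T := by
    have e1 : N * Pm⁻¹ * M * Pm⁻¹ * N = K * (Pm⁻¹ * N) := by
      rw [← hK1]; simp only [Matrix.mul_assoc]
    have e2 : M * Pm⁻¹ * N * Pm⁻¹ * M = K * (Pm⁻¹ * M) := by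
      rw [← hK2]; simp only [Matrix.mul_assoc]
    rw [e1, e2, ← smul_add, ← Matrix.mul_add, ← Matrix.mul_add, add_comm (N : Matrix (Fin n) (Fin n) ℂ) M, ← hPm_def,
      Matrix.nonsing_inv_mul Pm hPmdet, Matrix.mul_one, hTK]
  -- hermitian facts
  have hPminvH : (Pm⁻¹).IsHermitian := hPm.1.inv
  -- final: pointwise comparison of quadratic forms
  apply sub_psd_of_forms _ _ hPhiH.1 hT.1
  intro w
  set u : Fin n → ℂ := (Pm⁻¹ * N) *ᵥ w with hu_def
  set v : Fin n → ℂ := (Pm⁻¹ * M) *ᵥ w with hv_def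
  have huv : u + v = w := by
    rw [hu_def, hv_def, ← Matrix.add_mulVec, ← Matrix.mul_add,
      add_comm (N : Matrix (Fin n) (Fin n) ℂ) M, ← hPm_def,
      Matrix.nonsing_inv_mul Pm hPmdet, Matrix.one_mulVec]
  have hformu : star u ⬝ᵥ M *ᵥ u = star w ⬝ᵥ (N * Pm⁻¹ * M * Pm⁻¹ * N) *ᵥ w := by
    simp only [hu_def, star_mulVec, Matrix.conjTranspose_mul, hPminvH.eq, hN.1.eq,
      Matrix.mulVec_mulVec, dotProduct_mulVec, Matrix.vecMul_vecMul, Matrix.mul_assoc]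
  have hformv : star v ⬝ᵥ N *ᵥ v = star w ⬝ᵥ (M * Pm⁻¹ * N * Pm⁻¹ * M) *ᵥ w := by
    simp only [hv_def, star_mulVec, Matrix.conjTranspose_mul, hPminvH.eq, hM.1.eq,
      Matrix.mulVec_mulVec, dotProduct_mulVec, Matrix.vecMul_vecMul, Matrix.mul_assoc]
  have hTform : star w ⬝ᵥ T *ᵥ w
      = (2:ℂ) * (star u ⬝ᵥ M *ᵥ u) + (2:ℂ) * (star v ⬝ᵥ N *ᵥ v) := by
    rw [hformu, hformv, ← hI3, Matrix.add_mulVec, dotProduct_add,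
      Matrix.smul_mulVec, Matrix.smul_mulVec, dotProduct_smul, dotProduct_smul,
      smul_eq_mul, smul_eq_mul]
  have hstep := step1 Φ hΦ X Y hX hY u v
  rw [huv] at hstep
  have hre : (star w ⬝ᵥ T *ᵥ w).re
      = 2 * (star u ⬝ᵥ M *ᵥ u).re + 2 * (star v ⬝ᵥ N *ᵥ v).re := by
    rw [hTform]
    simp [Complex.add_re, Complex.mul_re]
  rw [hre]
  exact hstep
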